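/- Let E be a d×d Hermitian complex matrix with spectral decomposition E = Σⱼ λⱼ vⱼvⱼ†, and let E₋ = −Σ_{j : λⱼ < 0} λⱼ vⱼvⱼ† be its negative part. Then for every pair of positive semidefinite d×d matrices F and G with E = F − G, one has ‖G‖ ≥ ‖E₋‖ (equivalently, ‖G‖² ≥ Σ_{j : λⱼ < 0} λⱼ²). Moreover the bound is attained: F = E₊ (the positive part) and G = E₋ are positive semidefinite with E = E₊ − E₋ and ‖E₋‖ = ‖E₋‖. -/

import Mathlib

set_option maxHeartbeats 1000000


open Matrix
open scoped ComplexOrder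

/-- Frobenius norm of a complex matrix. -/
noncomputable def frob {d : ℕ} (A : Matrix (Fin d) (Fin d) ℂ) : ℝ :=
  Real.sqrt ((Aᴴ * A).trace).re

/-- Positive part E₊ = Σ_{λⱼ>0} λⱼ vⱼvⱼ† of a Hermitian matrix. -/
noncomputable def hermPosPart {d : ℕ} {E : Matrix (Fin d) (Fin d) ℂ}
    (hE : E.IsHermitian) : Matrix (Fin d) (Fin d) ℂ :=
  (hE.eigenvectorUnitary : Matrix (Fin d) (Fin d) ℂ) *
    Matrix.diagonal (fun j => ((max (hE.eigenvalues j) 0 : ℝ) : ℂ)) *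
    (hE.eigenvectorUnitary : Matrix (Fin d) (Fin d) ℂ)ᴴ

/-- Negative part E₋ = −Σ_{λⱼ<0} λⱼ vⱼvⱼ† of a Hermitian matrix. -/
noncomputable def hermNegPart {d : ℕ} {E : Matrix (Fin d) (Fin d) ℂ}
    (hE : E.IsHermitian) : Matrix (Fin d) (Fin d) ℂ :=
  (hE.eigenvectorUnitary : Matrix (Fin d) (Fin d) ℂ) *
    Matrix.diagonal (fun j => ((max (-hE.eigenvalues j) 0 : ℝ) : ℂ)) *
    (hE.eigenvectorUnitary : Matrix (Fin d) (Fin d) ℂ)ᴴ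

lemma frobSq_eq_sum {d : ℕ} (A : Matrix (Fin d) (Fin d) ℂ) :
    ((Aᴴ * A).trace).re = ∑ j, ∑ i, Complex.normSq (A i j) := by
  simp only [Matrix.trace, Matrix.diag, Matrix.mul_apply, Matrix.conjTranspose_apply]
  rw [Complex.re_sum]
  refine Finset.sum_congr rfl fun j _ => ?_
  rw [Complex.re_sum]
  refine Finset.sum_congr rfl fun i _ => ?_
  simp [Complex.normSq_apply, Complex.mul_re]

lemma frobSq_nonneg {d : ℕ} (A : Matrix (Fin d) (Fin d) ℂ) :
    0 ≤ ((Aᴴ * A).trace).re := by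
  rw [frobSq_eq_sum]
  exact Finset.sum_nonneg fun j _ => Finset.sum_nonneg fun i _ => Complex.normSq_nonneg _

lemma frob_sq {d : ℕ} (A : Matrix (Fin d) (Fin d) ℂ) :
    frob A ^ 2 = ((Aᴴ * A).trace).re :=
  Real.sq_sqrt (frobSq_nonneg A)

lemma frobSq_conj {d : ℕ} (V B : Matrix (Fin d) (Fin d) ℂ)
    (h1 : V * Vᴴ = 1) : (((Vᴴ * B * V)ᴴ * (Vᴴ * B * V)).trace).re
      = ((Bᴴ * B).trace).re := by
  have cancel : ∀ X : Matrix (Fin d) (Fin d) ℂ, V * (Vᴴ * X) = X := by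
    intro X; rw [← Matrix.mul_assoc, h1, Matrix.one_mul]
  have h2 : (Vᴴ * B * V)ᴴ * (Vᴴ * B * V) = Vᴴ * (Bᴴ * B) * V := by
    simp [Matrix.conjTranspose_mul, Matrix.mul_assoc, cancel]
  rw [h2, Matrix.trace_mul_cycle, ← Matrix.mul_assoc, h1, Matrix.one_mul]

theorem negPart_minimal_decomposition {d : ℕ}
    (E : Matrix (Fin d) (Fin d) ℂ) (hE : E.IsHermitian) :
    (∀ F G : Matrix (Fin d) (Fin d) ℂ, F.PosSemidef → G.PosSemidef →
      E = F - G → frob (hermNegPart hE) ≤ frob G) ∧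
    (∀ F G : Matrix (Fin d) (Fin d) ℂ, F.PosSemidef → G.PosSemidef →
      E = F - G →
        (∑ j, if hE.eigenvalues j < 0 then (hE.eigenvalues j) ^ 2 else 0)
          ≤ frob G ^ 2) ∧
    frob (hermNegPart hE) ^ 2
      = (∑ j, if hE.eigenvalues j < 0 then (hE.eigenvalues j) ^ 2 else 0) ∧
    (hermPosPart hE).PosSemidef ∧ (hermNegPart hE).PosSemidef ∧
    E = hermPosPart hE - hermNegPart hE := by
  set U : Matrix (Fin d) (Fin d) ℂ := (hE.eigenvectorUnitary : Matrix (Fin d) (Fin d) ℂ) with hU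
  have hUmem := hE.eigenvectorUnitary.2
  have hUU' : U * Uᴴ = 1 := by
    have := (Matrix.mem_unitaryGroup_iff.mp hUmem)
    simpa [Matrix.star_eq_conjTranspose] using this
  have hU'U : Uᴴ * U = 1 := by
    have := (Matrix.mem_unitaryGroup_iff'.mp hUmem)
    simpa [Matrix.star_eq_conjTranspose] using this
  have hspec : E = U * Matrix.diagonal (fun j => ((hE.eigenvalues j : ℝ) : ℂ)) * Uᴴ := by
    have := hE.spectral_theorem
    simpa [Matrix.star_eq_conjTranspose, Function.comp_def] using this
  -- key: frob of negPart squared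
  have hnegsq : frob (hermNegPart hE) ^ 2
      = (∑ j, if hE.eigenvalues j < 0 then (hE.eigenvalues j) ^ 2 else 0) := by
    rw [frob_sq]
    have hW : hermNegPart hE
        = (Uᴴ)ᴴ * Matrix.diagonal (fun j => ((max (-hE.eigenvalues j) 0 : ℝ) : ℂ)) * Uᴴ := by
      simp [hermNegPart, hU]
    rw [hW, frobSq_conj _ _ (by simpa using hU'U), frobSq_eq_sum]
    refine Finset.sum_congr rfl fun j _ => ?_
    rw [Finset.sum_eq_single j]
    · simp only [Matrix.diagonal_apply_eq, Complex.normSq_ofReal]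
      rcases lt_or_ge (hE.eigenvalues j) 0 with h | h
      · rw [if_pos h, max_eq_left (by linarith)]; ring
      · rw [if_neg (not_lt.mpr h), max_eq_right (by linarith)]; ring
    · intro i _ hij
      rw [Matrix.diagonal_apply_ne _ (by exact hij)]
      simp
    · intro h; exact absurd (Finset.mem_univ j) h
  -- main inequality on squares
  have hmain : ∀ F G : Matrix (Fin d) (Fin d) ℂ, F.PosSemidef → G.PosSemidef →
      E = F - G →
        (∑ j, if hE.eigenvalues j < 0 then (hE.eigenvalues j) ^ 2 else 0)
          ≤ frob G ^ 2 := by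
    intro F G hF hG hEFG
    rw [frob_sq]
    have hGconj : (((Uᴴ * G * U)ᴴ * (Uᴴ * G * U)).trace).re = ((Gᴴ * G).trace).re :=
      frobSq_conj U G hUU'
    rw [← hGconj, frobSq_eq_sum]
    set G' := Uᴴ * G * U with hG'
    set F' := Uᴴ * F * U with hF'
    have hF'psd : F'.PosSemidef := hF.conjTranspose_mul_mul_same U
    have hD : Uᴴ * E * U = Matrix.diagonal (fun j => ((hE.eigenvalues j : ℝ) : ℂ)) := by
      conv_lhs => rw [hspec]
      calc Uᴴ * (U * Matrix.diagonal (fun j => ((hE.eigenvalues j : ℝ) : ℂ)) * Uᴴ) * U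
          = (Uᴴ * U) * Matrix.diagonal (fun j => ((hE.eigenvalues j : ℝ) : ℂ)) * (Uᴴ * U) := by
            noncomm_ring
        _ = _ := by rw [hU'U]; simp
    have hdiagsub : G' = F' - Matrix.diagonal (fun j => ((hE.eigenvalues j : ℝ) : ℂ)) := by
      have hGe : G = F - E := by rw [hEFG]; abel
      rw [hG', hF', hGe, ← hD]
      noncomm_ring
    refine Finset.sum_le_sum fun j _ => ?_
    rcases lt_or_ge (hE.eigenvalues j) 0 with h | h
    · rw [if_pos h]
      have hre : -(hE.eigenvalues j) ≤ (G' j j).re := by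
        have h0 : 0 ≤ (F' j j).re := by
          have := hF'psd.re_dotProduct_nonneg (Pi.single j 1)
          have heq : dotProduct (star (Pi.single j 1)) (F' *ᵥ Pi.single j 1) = F' j j := by
            simp [dotProduct, Matrix.mulVec, Pi.single_apply, Finset.sum_ite_eq',
              Finset.sum_ite_eq]
          rw [heq] at this
          exact this
        have : (G' j j).re = (F' j j).re - hE.eigenvalues j := by
          rw [hdiagsub]
          simp [Matrix.sub_apply]
        linarith
      calc hE.eigenvalues j ^ 2 ≤ (G' j j).re ^ 2 := by
            nlinarith
        _ ≤ Complex.normSq (G' j j) := by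
            rw [Complex.normSq_apply]; nlinarith [sq_nonneg (G' j j).im]
        _ ≤ ∑ i, Complex.normSq (G' i j) := by
            exact Finset.single_le_sum (f := fun i => Complex.normSq (G' i j))
              (fun i _ => Complex.normSq_nonneg _) (Finset.mem_univ j)
    · rw [if_neg (not_lt.mpr h)]
      exact Finset.sum_nonneg fun i _ => Complex.normSq_nonneg _
  refine ⟨?_, hmain, hnegsq, ?_, ?_, ?_⟩
  · intro F G hF hG hEFG
    have h1 := hmain F G hF hG hEFG
    rw [← hnegsq] at h1
    have h2 : 0 ≤ frob (hermNegPart hE) := Real.sqrt_nonneg _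
    have h3 : 0 ≤ frob G := Real.sqrt_nonneg _
    nlinarith
  · exact (Matrix.PosSemidef.diagonal fun i =>
      Complex.zero_le_real.mpr (le_max_right _ _)).mul_mul_conjTranspose_same U
  · exact (Matrix.PosSemidef.diagonal fun i =>
      Complex.zero_le_real.mpr (le_max_right _ _)).mul_mul_conjTranspose_same U
  · have key : hermPosPart hE - hermNegPart hE
        = U * Matrix.diagonal (fun j => ((hE.eigenvalues j : ℝ) : ℂ)) * Uᴴ := by
      have h1 : hermPosPart hE - hermNegPart hE
          = U * (Matrix.diagonal (fun j => ((max (hE.eigenvalues j) 0 : ℝ) : ℂ))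
            - Matrix.diagonal (fun j => ((max (-hE.eigenvalues j) 0 : ℝ) : ℂ))) * Uᴴ := by
        rw [hermPosPart, hermNegPart]
        noncomm_ring
      have h2 : (fun i => ((max (hE.eigenvalues i) 0 : ℝ) : ℂ)
            - ((max (-hE.eigenvalues i) 0 : ℝ) : ℂ))
          = fun i => ((hE.eigenvalues i : ℝ) : ℂ) := by
        funext i
        rw [← Complex.ofReal_sub, max_zero_sub_max_neg_zero_eq_self]
      rw [h1, Matrix.diagonal_sub, h2]
    rw [key]
    exact hspec
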